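/- If u and v are words over a finite alphabet A with |u| = |v| ≤ 2k − 1, and u and v are k-Abelian equivalent, then u = v. -/

import Mathlib

/-- Number of occurrences of `x` as a factor of `w`. -/
def occ {A : Type*} [DecidableEq A] (w x : List A) : ℕ :=
  ((List.range (w.length + 1)).filter (fun i => decide (x <+: w.drop i))).length

/-- `k`-Abelian equivalence. -/
def KAbEq {A : Type*} [DecidableEq A] (k : ℕ) (u v : List A) : Prop :=
  ∀ x : List A, x ≠ [] → x.length ≤ k → occ u x = occ v x

lemma occ_nil {A : Type*} [DecidableEq A] (x : List A) :
    occ ([] : List A) x = if x = [] then 1 else 0 := by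
  by_cases h : x = [] <;> simp [occ, h, List.prefix_nil]

lemma occ_cons {A : Type*} [DecidableEq A] (a : A) (u x : List A) :
    occ (a :: u) x = (if x <+: a :: u then 1 else 0) + occ u x := by
  unfold occ
  rw [List.length_cons, List.range_succ_eq_map (n := u.length + 1), List.filter_cons]
  by_cases hx : x <+: a :: u <;>
    simp [hx, List.filter_map, Function.comp_def, Nat.succ_eq_add_one,
      List.drop_succ_cons] <;> omega

lemma occ_singleton {A : Type*} [DecidableEq A] (u : List A) (a : A) :
    occ u [a] = u.count a := by
  induction u with
  | nil => simp [occ_nil]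
  | cons b u ih =>
      rw [occ_cons, ih, List.count_cons]
      by_cases h : a = b
      · subst h; simp; omega
      · simp [h, Ne.symm h, List.cons_prefix_cons]

lemma occ_pos {A : Type*} [DecidableEq A] {u x : List A} (hx : x <+: u) :
    1 ≤ occ u x := by
  cases u with
  | nil => simp_all [occ_nil, List.prefix_nil]
  | cons a u => rw [occ_cons]; simp [hx]

lemma factor_of_occ_pos {A : Type*} [DecidableEq A] {u x : List A} (hx : 1 ≤ occ u x) :
    ∃ i, x <+: u.drop i := by
  unfold occ at hx
  obtain ⟨i, hi⟩ := List.exists_mem_of_length_pos (Nat.lt_of_lt_of_le Nat.zero_lt_one hx)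
  exact ⟨i, by simpa using (List.mem_filter.mp hi).2⟩

lemma occ_left {A : Type*} [Fintype A] [DecidableEq A] (u : List A) :
    ∀ x : List A, x ≠ [] →
      occ u x = (if x <+: u then 1 else 0) + ∑ a : A, occ u (a :: x) := by
  induction u with
  | nil => intro x hx; simp [occ_nil, hx]
  | cons c u ih =>
      intro x hx
      rw [occ_cons, ih x hx]
      simp_rw [occ_cons]
      rw [Finset.sum_add_distrib]
      have hs : ∑ a : A, (if (a :: x) <+: c :: u then 1 else 0) =
          (if x <+: u then 1 else 0) := by
        simp_rw [List.cons_prefix_cons]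
        by_cases hp : x <+: u
        · simp [hp]
        · simp [hp]
      rw [hs]

lemma concat_prefix_iff {A : Type*} (w x : List A) (a : A)
    (h2 : x.length < w.length) :
    (x ++ [a] <+: w) ↔ (x <+: w ∧ a = w[x.length]) := by
  constructor
  · intro hq
    have hx : x <+: w := (List.prefix_append x [a]).trans hq
    refine ⟨hx, ?_⟩
    have := hq.getElem (i := x.length) (by simp)
    simpa using this
  · rintro ⟨hx, rfl⟩
    have ht : w.take (x.length + 1) = x ++ [w[x.length]] := by
      rw [List.take_succ, ← List.prefix_iff_eq_take.mp hx]
      simp [List.getElem?_eq_getElem h2]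
    exact ht ▸ List.take_prefix _ w

lemma sum_concat_prefix {A : Type*} [Fintype A] [DecidableEq A] (w x : List A) :
    ∑ a : A, (if x ++ [a] <+: w then 1 else 0) =
      if x <+: w ∧ x.length < w.length then 1 else 0 := by
  by_cases hp : x <+: w ∧ x.length < w.length
  · obtain ⟨hp1, hp2⟩ := hp
    have key : ∀ a : A, (x ++ [a] <+: w) ↔ (a = w[x.length]) := fun a => by
      rw [concat_prefix_iff w x a hp2]; exact and_iff_right hp1
    simp_rw [key]
    simp [hp1, hp2]
  · have key : ∀ a : A, ¬ (x ++ [a] <+: w) := by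
      intro a hq
      exact hp ⟨(List.prefix_append x [a]).trans hq,
        by have := hq.length_le; simp at this; omega⟩
    simp [key, hp]

lemma occ_right {A : Type*} [Fintype A] [DecidableEq A] (u : List A) :
    ∀ x : List A, x ≠ [] →
      occ u x = (if x <:+ u then 1 else 0) + ∑ a : A, occ u (x ++ [a]) := by
  induction u with
  | nil =>
      intro x hx
      have : ∀ a : A, x ++ [a] ≠ [] := fun a => by simp
      simp [occ_nil, hx, this]
  | cons c u ih =>
      intro x hx
      rw [occ_cons, ih x hx]
      simp_rw [occ_cons]
      rw [Finset.sum_add_distrib, sum_concat_prefix]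
      have harith : (if x <+: c :: u then 1 else 0) + (if x <:+ u then 1 else 0) =
          (if x <:+ c :: u then 1 else 0) +
            (if x <+: c :: u ∧ x.length < (c :: u).length then 1 else 0) := by
        by_cases hfull : x = c :: u
        · subst hfull
          have h1 : ¬ ((c :: u) <:+ u) := fun hs => by
            have := hs.length_le; simp at this
          simp [h1]
        · have h2 : (x <:+ c :: u) ↔ (x <:+ u) := by
            rw [List.suffix_cons_iff]; simp [hfull]
          have h3 : (x <+: c :: u ∧ x.length < (c :: u).length) ↔ (x <+: c :: u) := by
            constructor
            · exact fun h => h.1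
            · intro h
              refine ⟨h, lt_of_le_of_ne h.length_le fun hlen => hfull ?_⟩
              exact List.IsPrefix.eq_of_length h hlen
          simp only [h2, h3]
          omega
      omega

lemma prefix_iff_of_kab {A : Type*} [Fintype A] [DecidableEq A] {k : ℕ} {u v : List A}
    (h : KAbEq k u v) {x : List A} (hxk : x.length + 1 ≤ k) : (x <+: u ↔ x <+: v) := by
  rcases eq_or_ne x [] with rfl | hx
  · simp
  · have e1 := occ_left u x hx
    have e2 := occ_left v x hx
    have h0 : occ u x = occ v x := h x hx (by omega)
    have hsum : ∑ a : A, occ u (a :: x) = ∑ a : A, occ v (a :: x) :=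
      Finset.sum_congr rfl fun a _ => h (a :: x) (by simp) (by simpa using hxk)
    rw [e1, e2, hsum] at h0
    by_cases p1 : x <+: u <;> by_cases p2 : x <+: v <;> simp_all

lemma suffix_iff_of_kab {A : Type*} [Fintype A] [DecidableEq A] {k : ℕ} {u v : List A}
    (h : KAbEq k u v) {x : List A} (hxk : x.length + 1 ≤ k) : (x <:+ u ↔ x <:+ v) := by
  rcases eq_or_ne x [] with rfl | hx
  · simp
  · have e1 := occ_right u x hx
    have e2 := occ_right v x hx
    have h0 : occ u x = occ v x := h x hx (by omega)
    have hsum : ∑ a : A, occ u (x ++ [a]) = ∑ a : A, occ v (x ++ [a]) :=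
      Finset.sum_congr rfl fun a _ => h (x ++ [a]) (by simp) (by simp; omega)
    rw [e1, e2, hsum] at h0
    by_cases p1 : x <:+ u <;> by_cases p2 : x <:+ v <;> simp_all

theorem stmt0 {A : Type*} [Fintype A] [DecidableEq A] (k : ℕ) (hk : 1 ≤ k)
    (u v : List A) (hlen : u.length = v.length) (hle : u.length ≤ 2 * k - 1)
    (h : KAbEq k u v) : u = v := by
  set n := u.length with hn
  by_cases hnk : n ≤ k
  · -- short case: u itself is a factor of v
    rcases eq_or_ne u [] with rfl | hu
    · exact (List.length_eq_zero_iff.mp hlen.symm).symm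
    · have h1 : occ v u = occ u u := (h u hu hnk).symm
      have h2 : 1 ≤ occ v u := h1 ▸ occ_pos (List.prefix_refl u)
      obtain ⟨i, hi⟩ := factor_of_occ_pos h2
      have hil : u.length ≤ v.length - i := by
        simpa using hi.length_le
      have hln : 1 ≤ n := by
        cases u
        · exact absurd rfl hu
        · simp [hn]
      have hi0 : i = 0 := by omega
      subst hi0
      simp only [List.drop_zero] at hi
      exact hi.eq_of_length hlen
  · push_neg at hnk
    -- shared prefix of length k-1
    have hpre : u.take (k - 1) = v.take (k - 1) := by
      have hl : (u.take (k - 1)).length = k - 1 := by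
        simp; omega
      have hp : u.take (k - 1) <+: v :=
        (prefix_iff_of_kab h (x := u.take (k - 1)) (by omega)).mp (List.take_prefix _ u)
      rw [List.prefix_iff_eq_take.mp hp, hl]
    -- shared suffix of length k-1
    have hsuf : u.drop (n - k + 1) = v.drop (n - k + 1) := by
      have hl : (u.drop (n - k + 1)).length = k - 1 := by
        simp [← hn]; omega
      have hs : u.drop (n - k + 1) <:+ v :=
        (suffix_iff_of_kab h (x := u.drop (n - k + 1)) (by omega)).mp (List.drop_suffix _ u)
      rw [List.suffix_iff_eq_drop.mp hs, hl, ← hlen]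
      congr 1
      omega
    by_cases hmid : n ≤ 2 * k - 2
    · -- prefix and suffix cover everything
      have key : ∀ w : List A, w.length = n →
          w = w.take (k - 1) ++ (w.drop (n - k + 1)).drop (k - 1 - (n - k + 1)) := by
        intro w hw
        rw [List.drop_drop]
        have he : (n - k + 1) + (k - 1 - (n - k + 1)) = k - 1 := by omega
        rw [he, List.take_append_drop]
      calc u = u.take (k - 1) ++ (u.drop (n - k + 1)).drop (k - 1 - (n - k + 1)) := key u rfl
        _ = v.take (k - 1) ++ (v.drop (n - k + 1)).drop (k - 1 - (n - k + 1)) := by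
            rw [hpre, hsuf]
        _ = v := (key v hlen.symm).symm
    · -- n = 2k-1 : middle letter determined by letter counts
      have hn2 : n = 2 * k - 1 := by omega
      have hux : k - 1 < u.length := by omega
      have hvx : k - 1 < v.length := by omega
      have hsuf' : u.drop k = v.drop k := by
        have hnk1 : n - k + 1 = k := by omega
        rwa [hnk1] at hsuf
      obtain ⟨c, hc⟩ : ∃ c, u.drop (k - 1) = c :: u.drop k := by
        refine ⟨u[k - 1], ?_⟩
        have e : k - 1 + 1 = k := by omega
        rw [List.drop_eq_getElem_cons hux, e]
      obtain ⟨d, hd⟩ : ∃ d, v.drop (k - 1) = d :: v.drop k := by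
        refine ⟨v[k - 1], ?_⟩
        have e : k - 1 + 1 = k := by omega
        rw [List.drop_eq_getElem_cons hvx, e]
      have hu : u = u.take (k - 1) ++ (c :: u.drop k) := by
        conv_lhs => rw [← List.take_append_drop (k - 1) u, hc]
      have hv : v = v.take (k - 1) ++ (d :: v.drop k) := by
        conv_lhs => rw [← List.take_append_drop (k - 1) v, hd]
      have hcount : u.count c = v.count c := by
        rw [← occ_singleton, ← occ_singleton]
        exact h [c] (by simp) (by simpa using hk)
      rw [hu, hv, hpre, hsuf'] at hcount
      simp only [List.count_append, List.count_cons, beq_iff_eq] at hcount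
      have hcd : c = d := by
        by_cases hcd' : c = d
        · exact hcd'
        · exfalso
          rw [if_pos trivial, if_neg (show ¬ d = c from fun hh => hcd' hh.symm)] at hcount
          omega
      rw [hu, hv, hpre, hsuf', hcd]
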